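/- In a partially additive field, two elements are summable if and only if they differ by a dimensionless factor; more precisely, if a is non-zero, then b is summable with a iff b = v × a for some dimensionless v. -/

import Mathlib

/-- A partially additive field: partial addition (modeled via `Option`, `none` = undefined),
total multiplication, per-element zeros, etc. -/
structure PAF (Q : Type*) where
  add : Q → Q → Option Q
  mul : Q → Q → Q
  zero : Q → Q
  one : Q
  neg : Q → Q
  inv : Q → Q
  add_comm : ∀ a b, add a b = add b a
  mul_comm : ∀ a b, mul a b = mul b a
  add_assoc : ∀ a b c, (add a b).bind (fun x => add x c) = (add b c).bind (fun x => add a x)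
  mul_assoc : ∀ a b c, mul (mul a b) c = mul a (mul b c)
  left_distrib : ∀ a b c, (add b c).map (mul a) = add (mul a b) (mul a c)
  add_zero : ∀ a, add a (zero a) = some a
  zero_unique : ∀ a z, add a z = some a → z = zero a
  mul_one : ∀ a, mul a one = a
  add_neg : ∀ a, add a (neg a) = some (zero a)
  mul_inv : ∀ a, (¬ ∃ b, a = zero b) → mul a (inv a) = one
  nontrivial : ∀ a b, a = zero b → ∃ c, (¬ ∃ d, c = zero d) ∧ a = zero c

namespace PAF
variable {Q : Type*} (F : PAF Q)

/-- `a` is a zero element. -/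
def IsZero (a : Q) : Prop := ∃ b, a = F.zero b

/-- `a` and `b` are summable (their sum is defined). -/
def Summable (a b : Q) : Prop := (F.add a b).isSome

/-- `a` is dimensionless iff it is summable with `1`. -/
def Dimensionless (a : Q) : Prop := F.Summable a F.one

/-- `n`-th power via the total multiplication. -/
def pow (a : Q) : ℕ → Q
  | 0 => F.one
  | n + 1 => F.mul a (pow a n)

end PAF

/-- For non-zero `a`, `b` is summable with `a` iff `b` differs from `a` by a dimensionless factor. -/
theorem summable_iff_dimensionless_factor {Q : Type*} (F : PAF Q) (a b : Q)
    (ha : ¬ F.IsZero a) :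
    F.Summable a b ↔ ∃ v : Q, F.Dimensionless v ∧ b = F.mul v a := by
  constructor
  · intro h
    refine ⟨F.mul b (F.inv a), ?_, ?_⟩
    · -- add (b * a⁻¹) 1 defined
      have hd := F.left_distrib (F.inv a) b a
      have hinv : F.mul (F.inv a) a = F.one := by
        rw [F.mul_comm]; exact F.mul_inv a ha
      rw [hinv] at hd
      have hba : (F.add b a).isSome := by
        rw [F.add_comm]; exact h
      unfold PAF.Dimensionless PAF.Summable
      have : F.mul (F.inv a) b = F.mul b (F.inv a) := F.mul_comm _ _
      rw [this] at hd
      rw [← hd]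
      simp only [Option.isSome_map]; exact hba
    · rw [F.mul_assoc, F.mul_comm (F.inv a) a, F.mul_inv a ha, F.mul_one]
  · rintro ⟨v, hv, rfl⟩
    have hd := F.left_distrib a v F.one
    rw [F.mul_one, F.mul_comm a v] at hd
    unfold PAF.Summable
    rw [F.add_comm, ← hd]
    simp only [Option.isSome_map]; exact hv
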